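/- Let R be an η-symmetric linear operator on ℝ^5 and suppose there exist real numbers λ1, λ2, λ3 and a basis X1, X2, X3, X4, X5 of ℝ^5 satisfying R X1 = λ1 X1, R X2 = λ1 X2 + X1, R X3 = λ1 X3 + X2, R X4 = λ2 X4 and R X5 = λ3 X5 (a Jordan structure of Segre type [311] or a degeneracy thereof, with exactly three independent eigenvectors). Then there exists a semi-null pentad (l, m, x, y, z) and real numbers ρ1, ρ4, ρ5 such that for all u, v: η(R u, v) = ρ1(η(l,u)η(m,v)+η(m,u)η(l,v)) + (η(l,u)η(x,v)+η(x,u)η(l,v)) + ρ1 η(x,u)η(x,v) + ρ4 η(y,u)η(y,v) + ρ5 η(z,u)η(z,v). (Canonical form for Segre type [311].) -/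

import Mathlib

set_option maxHeartbeats 1000000
def eta (u v : Fin 5 → ℝ) : ℝ :=
  -u 0 * v 0 + u 1 * v 1 + u 2 * v 2 + u 3 * v 3 + u 4 * v 4

lemma eta_comm (u v : Fin 5 → ℝ) : eta u v = eta v u := by unfold eta; ring
lemma eta_add_left (u v w : Fin 5 → ℝ) : eta (u + v) w = eta u w + eta v w := by
  simp only [eta, Pi.add_apply]; ring
lemma eta_sub_left (u v w : Fin 5 → ℝ) : eta (u - v) w = eta u w - eta v w := by
  simp only [eta, Pi.sub_apply]; ring
lemma eta_smul_left (c : ℝ) (u v : Fin 5 → ℝ) : eta (c • u) v = c * eta u v := by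
  simp only [eta, Pi.smul_apply, smul_eq_mul]; ring
lemma eta_add_right (u v w : Fin 5 → ℝ) : eta u (v + w) = eta u v + eta u w := by
  simp only [eta, Pi.add_apply]; ring
lemma eta_sub_right (u v w : Fin 5 → ℝ) : eta u (v - w) = eta u v - eta u w := by
  simp only [eta, Pi.sub_apply]; ring
lemma eta_smul_right (c : ℝ) (u v : Fin 5 → ℝ) : eta u (c • v) = c * eta u v := by
  simp only [eta, Pi.smul_apply, smul_eq_mul]; ring
lemma eta_nondeg (w : Fin 5 → ℝ) (h : ∀ v, eta w v = 0) : w = 0 := by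
  funext i
  fin_cases i
  · have := h ![1,0,0,0,0]; simp [eta] at this; simpa using this
  · have := h ![0,1,0,0,0]; simp [eta] at this; simpa using this
  · have := h ![0,0,1,0,0]; simp [eta] at this; simpa using this
  · have := h ![0,0,0,1,0]; simp [eta] at this; simpa using this
  · have := h ![0,0,0,0,1]; simp [eta] at this; simpa using this

lemma timelike_ortho (t v : Fin 5 → ℝ) (ht : eta t t < 0) (hv : eta t v = 0)
    (hvz : v ≠ 0) : 0 < eta v v := by
  simp only [eta] at ht hv ⊢
  rcases lt_or_ge 0 (v 1^2 + v 2^2 + v 3^2 + v 4^2) with hS | hS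
  · have hv' : t 0 * v 0 = t 1*v 1 + t 2*v 2 + t 3*v 3 + t 4*v 4 := by linarith
    have hv2 : (t 0 * v 0)^2 = (t 1*v 1 + t 2*v 2 + t 3*v 3 + t 4*v 4)^2 := by rw [hv']
    have cs : (t 1*v 1 + t 2*v 2 + t 3*v 3 + t 4*v 4)^2 ≤
        (t 1^2+t 2^2+t 3^2+t 4^2) * (v 1^2+v 2^2+v 3^2+v 4^2) := by
      nlinarith [sq_nonneg (t 1*v 2 - t 2*v 1), sq_nonneg (t 1*v 3 - t 3*v 1),
        sq_nonneg (t 1*v 4 - t 4*v 1), sq_nonneg (t 2*v 3 - t 3*v 2),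
        sq_nonneg (t 2*v 4 - t 4*v 2), sq_nonneg (t 3*v 4 - t 4*v 3)]
    have hT : (t 1^2+t 2^2+t 3^2+t 4^2) < t 0^2 := by nlinarith []
    have hts : (t 1^2+t 2^2+t 3^2+t 4^2) * (v 1^2+v 2^2+v 3^2+v 4^2) < t 0^2 * (v 1^2+v 2^2+v 3^2+v 4^2) :=
      mul_lt_mul_of_pos_right hT hS
    have ht02 : 0 < t 0^2 := by nlinarith [sq_nonneg (t 1), sq_nonneg (t 2), sq_nonneg (t 3), sq_nonneg (t 4)]
    have hkey : t 0^2 * v 0^2 < t 0^2 * (v 1^2+v 2^2+v 3^2+v 4^2) := by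
      calc t 0^2 * v 0^2 = (t 0 * v 0)^2 := by ring
        _ = (t 1*v 1 + t 2*v 2 + t 3*v 3 + t 4*v 4)^2 := hv2
        _ ≤ _ := cs
        _ < _ := hts
    have hfin : v 0^2 < v 1^2+v 2^2+v 3^2+v 4^2 := (mul_lt_mul_iff_right₀ ht02).mp hkey
    nlinarith [hfin]
  · exfalso
    have h1 : v 1 = 0 := by nlinarith [sq_nonneg (v 1), sq_nonneg (v 2), sq_nonneg (v 3), sq_nonneg (v 4)]
    have h2 : v 2 = 0 := by nlinarith [sq_nonneg (v 1), sq_nonneg (v 2), sq_nonneg (v 3), sq_nonneg (v 4)]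
    have h3 : v 3 = 0 := by nlinarith [sq_nonneg (v 1), sq_nonneg (v 2), sq_nonneg (v 3), sq_nonneg (v 4)]
    have h4 : v 4 = 0 := by nlinarith [sq_nonneg (v 1), sq_nonneg (v 2), sq_nonneg (v 3), sq_nonneg (v 4)]
    have ht0 : t 0 ≠ 0 := by intro h0; rw [h0] at ht; nlinarith [sq_nonneg (t 1), sq_nonneg (t 2), sq_nonneg (t 3), sq_nonneg (t 4)]
    have h0 : v 0 = 0 := by
      have : -t 0 * v 0 = 0 := by rw [h1, h2, h3, h4] at hv; linarith
      have h' : t 0 * v 0 = 0 := by linarith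
      rcases mul_eq_zero.mp h' with h | h
      · exact absurd h ht0
      · exact h
    apply hvz
    funext i; fin_cases i <;> simpa [h0, h1, h2, h3, h4]

lemma eta_zero_left (v : Fin 5 → ℝ) : eta 0 v = 0 := by simp [eta]
lemma eta_zero_right (v : Fin 5 → ℝ) : eta v 0 = 0 := by simp [eta]

def SemiNullPentad (l m x y z : Fin 5 → ℝ) : Prop :=
  eta l m = 1 ∧ eta x x = 1 ∧ eta y y = 1 ∧ eta z z = 1 ∧
  eta l l = 0 ∧ eta m m = 0 ∧
  eta l x = 0 ∧ eta l y = 0 ∧ eta l z = 0 ∧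
  eta m x = 0 ∧ eta m y = 0 ∧ eta m z = 0 ∧
  eta x y = 0 ∧ eta x z = 0 ∧ eta y z = 0

theorem canonical_form_311
    (R : (Fin 5 → ℝ) →ₗ[ℝ] (Fin 5 → ℝ))
    (hR : ∀ u v : Fin 5 → ℝ, eta (R u) v = eta u (R v))
    (lam1 lam2 lam3 : ℝ) (X1 X2 X3 X4 X5 : Fin 5 → ℝ)
    (hbasis : LinearIndependent ℝ ![X1, X2, X3, X4, X5] ∧
      Submodule.span ℝ {X1, X2, X3, X4, X5} = (⊤ : Submodule ℝ (Fin 5 → ℝ)))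
    (h1 : R X1 = lam1 • X1) (h2 : R X2 = lam1 • X2 + X1)
    (h3 : R X3 = lam1 • X3 + X2) (h4 : R X4 = lam2 • X4) (h5 : R X5 = lam3 • X5) :
    ∃ l m x y z : Fin 5 → ℝ, SemiNullPentad l m x y z ∧
      ∃ p1 p4 p5 : ℝ, ∀ u v : Fin 5 → ℝ, eta (R u) v =
        p1 * (eta l u * eta m v + eta m u * eta l v) +
        (eta l u * eta x v + eta x u * eta l v) +
        p1 * (eta x u * eta x v) + p4 * (eta y u * eta y v) +
        p5 * (eta z u * eta z v) := by
  obtain ⟨hli, hspan⟩ := hbasis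
  have li := Fintype.linearIndependent_iff.mp hli
  -- basic eta relations from eta-symmetry of R
  have r11 : eta X1 X1 = 0 := by
    have h := hR X1 X2; rw [h1, h2] at h
    simp only [eta_add_left, eta_add_right, eta_sub_left, eta_sub_right, eta_smul_left, eta_smul_right] at h; linear_combination -h
  have r12 : eta X1 X2 = 0 := by
    have h := hR X1 X3; rw [h1, h3] at h
    simp only [eta_add_left, eta_add_right, eta_sub_left, eta_sub_right, eta_smul_left, eta_smul_right] at h; linear_combination -h
  have r22 : eta X2 X2 = eta X1 X3 := by
    have h := hR X2 X3; rw [h2, h3] at h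
    simp only [eta_add_left, eta_add_right, eta_sub_left, eta_sub_right, eta_smul_left, eta_smul_right] at h; linear_combination -h
  -- relations with X4
  have hE1 : lam1 * eta X1 X4 = lam2 * eta X1 X4 := by
    have h := hR X1 X4; rw [h1, h4] at h; simp only [eta_add_left, eta_add_right, eta_sub_left, eta_sub_right, eta_smul_left, eta_smul_right] at h; linear_combination h
  have hE2 : lam1 * eta X2 X4 + eta X1 X4 = lam2 * eta X2 X4 := by
    have h := hR X2 X4; rw [h2, h4] at h; simp only [eta_add_left, eta_add_right, eta_sub_left, eta_sub_right, eta_smul_left, eta_smul_right] at h; linear_combination h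
  have hE3 : lam1 * eta X3 X4 + eta X2 X4 = lam2 * eta X3 X4 := by
    have h := hR X3 X4; rw [h3, h4] at h; simp only [eta_add_left, eta_add_right, eta_sub_left, eta_sub_right, eta_smul_left, eta_smul_right] at h; linear_combination h
  obtain ⟨r14, r24, k4⟩ : eta X1 X4 = 0 ∧ eta X2 X4 = 0 ∧ (lam2 - lam1) * eta X3 X4 = 0 := by
    rcases eq_or_ne lam2 lam1 with heq | hne
    · subst heq
      have h24 : eta X2 X4 = 0 := by linear_combination hE3
      have h14 : eta X1 X4 = 0 := by linear_combination hE2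
      exact ⟨h14, h24, by rw [sub_self, zero_mul]⟩
    · have hμ : lam2 - lam1 ≠ 0 := sub_ne_zero.mpr hne
      have h14 : eta X1 X4 = 0 := by
        have : (lam2 - lam1) * eta X1 X4 = 0 := by linear_combination -hE1
        exact (mul_eq_zero.mp this).resolve_left hμ
      have h24 : eta X2 X4 = 0 := by
        have : (lam2 - lam1) * eta X2 X4 = 0 := by linear_combination -hE2 + h14
        exact (mul_eq_zero.mp this).resolve_left hμ
      exact ⟨h14, h24, by linear_combination -hE3 + h24⟩
  -- relations with X5
  have hF1 : lam1 * eta X1 X5 = lam3 * eta X1 X5 := by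
    have h := hR X1 X5; rw [h1, h5] at h; simp only [eta_add_left, eta_add_right, eta_sub_left, eta_sub_right, eta_smul_left, eta_smul_right] at h; linear_combination h
  have hF2 : lam1 * eta X2 X5 + eta X1 X5 = lam3 * eta X2 X5 := by
    have h := hR X2 X5; rw [h2, h5] at h; simp only [eta_add_left, eta_add_right, eta_sub_left, eta_sub_right, eta_smul_left, eta_smul_right] at h; linear_combination h
  have hF3 : lam1 * eta X3 X5 + eta X2 X5 = lam3 * eta X3 X5 := by
    have h := hR X3 X5; rw [h3, h5] at h; simp only [eta_add_left, eta_add_right, eta_sub_left, eta_sub_right, eta_smul_left, eta_smul_right] at h; linear_combination h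
  obtain ⟨r15, r25, k5⟩ : eta X1 X5 = 0 ∧ eta X2 X5 = 0 ∧ (lam3 - lam1) * eta X3 X5 = 0 := by
    rcases eq_or_ne lam3 lam1 with heq | hne
    · subst heq
      have h25 : eta X2 X5 = 0 := by linear_combination hF3
      have h15 : eta X1 X5 = 0 := by linear_combination hF2
      exact ⟨h15, h25, by rw [sub_self, zero_mul]⟩
    · have hμ : lam3 - lam1 ≠ 0 := sub_ne_zero.mpr hne
      have h15 : eta X1 X5 = 0 := by
        have : (lam3 - lam1) * eta X1 X5 = 0 := by linear_combination -hF1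
        exact (mul_eq_zero.mp this).resolve_left hμ
      have h25 : eta X2 X5 = 0 := by
        have : (lam3 - lam1) * eta X2 X5 = 0 := by linear_combination -hF2 + h15
        exact (mul_eq_zero.mp this).resolve_left hμ
      exact ⟨h15, h25, by linear_combination -hF3 + h25⟩
  have k45 : (lam2 - lam3) * eta X4 X5 = 0 := by
    have h := hR X4 X5; rw [h4, h5] at h; simp only [eta_add_left, eta_add_right, eta_sub_left, eta_sub_right, eta_smul_left, eta_smul_right] at h; linear_combination h
  -- X1 is nonzero
  have hX1ne : X1 ≠ 0 := by
    intro h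
    have h0 := li ![1, 0, 0, 0, 0] (by rw [Fin.sum_univ_five]; simp [h]) 0
    norm_num at h0
  -- a = eta X1 X3 is nonzero
  have ha0 : eta X1 X3 ≠ 0 := by
    intro h
    apply hX1ne
    apply eta_nondeg
    intro v
    have hv : v ∈ Submodule.span ℝ ({X1, X2, X3, X4, X5} : Set (Fin 5 → ℝ)) := by
      rw [hspan]; trivial
    refine Submodule.span_induction (p := fun w _ => eta X1 w = 0) ?_ ?_ ?_ ?_ hv
    · intro w hw
      simp only [Set.mem_insert_iff, Set.mem_singleton_iff] at hw
      rcases hw with rfl | rfl | rfl | rfl | rfl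
      exacts [r11, r12, h, r14, r15]
    · exact eta_zero_right X1
    · intro u w _ _ hu hw; rw [eta_add_right, hu, hw, add_zero]
    · intro c w _ hw; rw [eta_smul_right, hw, mul_zero]
  -- name the Gram entries
  set a := eta X1 X3 with hadef
  set b := eta X2 X3 with hbdef
  set c := eta X3 X3 with hcdef
  set d4 := eta X3 X4 with hd4def
  set d5 := eta X3 X5 with hd5def
  set f44 := eta X4 X4 with hf44def
  set f45 := eta X4 X5 with hf45def
  set f55 := eta X5 X5 with hf55def
  have p11 : eta X1 X1 = 0 := r11
  have p12 : eta X1 X2 = 0 := r12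
  have p21 : eta X2 X1 = 0 := (eta_comm _ _).trans r12
  have p13 : eta X1 X3 = a := hadef.symm
  have p31 : eta X3 X1 = a := (eta_comm _ _).trans hadef.symm
  have p14 : eta X1 X4 = 0 := r14
  have p41 : eta X4 X1 = 0 := (eta_comm _ _).trans r14
  have p15 : eta X1 X5 = 0 := r15
  have p51 : eta X5 X1 = 0 := (eta_comm _ _).trans r15
  have p22 : eta X2 X2 = a := r22
  have p23 : eta X2 X3 = b := hbdef.symm
  have p32 : eta X3 X2 = b := (eta_comm _ _).trans hbdef.symm
  have p24 : eta X2 X4 = 0 := r24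
  have p42 : eta X4 X2 = 0 := (eta_comm _ _).trans r24
  have p25 : eta X2 X5 = 0 := r25
  have p52 : eta X5 X2 = 0 := (eta_comm _ _).trans r25
  have p33 : eta X3 X3 = c := hcdef.symm
  have p34 : eta X3 X4 = d4 := hd4def.symm
  have p43 : eta X4 X3 = d4 := (eta_comm _ _).trans hd4def.symm
  have p35 : eta X3 X5 = d5 := hd5def.symm
  have p53 : eta X5 X3 = d5 := (eta_comm _ _).trans hd5def.symm
  have p44 : eta X4 X4 = f44 := hf44def.symm
  have p45 : eta X4 X5 = f45 := hf45def.symm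
  have p54 : eta X5 X4 = f45 := (eta_comm _ _).trans hf45def.symm
  have p55 : eta X5 X5 = f55 := hf55def.symm
  -- a timelike vector in span(X1, X3)
  set tvec := (1 + c / 2) • X1 - a • X3 with htvecdef
  have htvec : eta tvec tvec = -(2 * a ^ 2) := by
    rw [htvecdef]; simp only [eta_add_left, eta_add_right, eta_sub_left, eta_sub_right, eta_smul_left, eta_smul_right, p11, p12, p21, p13, p31, p14, p41, p15, p51, p22, p23, p32, p24, p42, p25, p52, p33, p34, p43, p35, p53, p44, p45, p54, p55]; ring
  have htvecneg : eta tvec tvec < 0 := by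
    rw [htvec]
    have h2 : 0 < a ^ 2 := (sq_nonneg a).lt_of_ne' (pow_ne_zero 2 ha0)
    linarith
  have horth : ∀ w : Fin 5 → ℝ, eta X1 w = 0 → eta X3 w = 0 → eta tvec w = 0 := by
    intro w hw1 hw3
    rw [htvecdef, eta_sub_left, eta_smul_left, eta_smul_left, hw1, hw3]; ring
  -- positivity of a
  set X2' := X2 - (b / a) • X1 with hX2'def
  have hX2'ne : X2' ≠ 0 := by
    intro h
    rw [hX2'def] at h
    have h0 := li ![-(b / a), 1, 0, 0, 0] ?_ 1
    · norm_num at h0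
    · rw [Fin.sum_univ_five]
      simp only [Matrix.cons_val_zero, Matrix.cons_val_one, Matrix.head_cons,
        Matrix.cons_val_two, Matrix.tail_cons, Matrix.cons_val_three, Matrix.cons_val_four]
      linear_combination (norm := module) h
  have hX2'X1 : eta X1 X2' = 0 := by
    rw [hX2'def]; simp only [eta_add_left, eta_add_right, eta_sub_left, eta_sub_right, eta_smul_left, eta_smul_right, p12, p11]; ring
  have hX2'X3 : eta X3 X2' = 0 := by
    rw [hX2'def]; simp only [eta_add_left, eta_add_right, eta_sub_left, eta_sub_right, eta_smul_left, eta_smul_right, p32, p31]; field_simp; ring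
  have hX2'sq : eta X2' X2' = a := by
    rw [hX2'def]; simp only [eta_add_left, eta_add_right, eta_sub_left, eta_sub_right, eta_smul_left, eta_smul_right, p22, p21, p12, p11]; ring
  have hapos : 0 < a := by
    have := timelike_ortho tvec X2' htvecneg (horth X2' hX2'X1 hX2'X3) hX2'ne
    rw [hX2'sq] at this; exact this
  -- normalization scalars
  set s := Real.sqrt a with hsdef
  have hs0 : s ≠ 0 := by
    rw [hsdef]; exact (Real.sqrt_pos.mpr hapos).ne'
  have hss : s ^ 2 = a := Real.sq_sqrt hapos.le
  set tt := s⁻¹ with httdef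
  have htt0 : tt ≠ 0 := inv_ne_zero hs0
  have htta : tt ^ 2 * a = 1 := by rw [httdef, ← hss]; field_simp
  obtain ⟨p, hp2⟩ : ∃ p : ℝ, 2 * p * a = -(tt * b) :=
    ⟨-(tt * b) / (2 * a), by field_simp⟩
  obtain ⟨q, hq2⟩ : ∃ q : ℝ, 2 * tt * q * a = -(tt ^ 2 * c + p ^ 2 * a + 2 * tt * p * b) :=
    ⟨-(tt ^ 2 * c + p ^ 2 * a + 2 * tt * p * b) / (2 * tt * a),
      by field_simp⟩
  -- the chain vectors
  set l := tt • X1 with hldef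
  set x := tt • X2 + p • X1 with hxdef
  set m := tt • X3 + p • X2 + q • X1 with hmdef
  have gll : eta l l = 0 := by
    rw [hldef]; simp only [eta_add_left, eta_add_right, eta_sub_left, eta_sub_right, eta_smul_left, eta_smul_right, p11, p12, p21, p13, p31, p14, p41, p15, p51, p22, p23, p32, p24, p42, p25, p52, p33, p34, p43, p35, p53, p44, p45, p54, p55]; ring
  have glx : eta l x = 0 := by
    rw [hldef, hxdef]; simp only [eta_add_left, eta_add_right, eta_sub_left, eta_sub_right, eta_smul_left, eta_smul_right, p11, p12, p21, p13, p31, p14, p41, p15, p51, p22, p23, p32, p24, p42, p25, p52, p33, p34, p43, p35, p53, p44, p45, p54, p55]; ring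
  have glm : eta l m = 1 := by
    rw [hldef, hmdef]; simp only [eta_add_left, eta_add_right, eta_sub_left, eta_sub_right, eta_smul_left, eta_smul_right, p11, p12, p21, p13, p31, p14, p41, p15, p51, p22, p23, p32, p24, p42, p25, p52, p33, p34, p43, p35, p53, p44, p45, p54, p55]; linear_combination htta
  have gxx : eta x x = 1 := by
    rw [hxdef]; simp only [eta_add_left, eta_add_right, eta_sub_left, eta_sub_right, eta_smul_left, eta_smul_right, p11, p12, p21, p13, p31, p14, p41, p15, p51, p22, p23, p32, p24, p42, p25, p52, p33, p34, p43, p35, p53, p44, p45, p54, p55]; linear_combination htta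
  have gxm : eta x m = 0 := by
    rw [hxdef, hmdef]; simp only [eta_add_left, eta_add_right, eta_sub_left, eta_sub_right, eta_smul_left, eta_smul_right, p11, p12, p21, p13, p31, p14, p41, p15, p51, p22, p23, p32, p24, p42, p25, p52, p33, p34, p43, p35, p53, p44, p45, p54, p55]; linear_combination tt * hp2
  have gmm : eta m m = 0 := by
    rw [hmdef]; simp only [eta_add_left, eta_add_right, eta_sub_left, eta_sub_right, eta_smul_left, eta_smul_right, p11, p12, p21, p13, p31, p14, p41, p15, p51, p22, p23, p32, p24, p42, p25, p52, p33, p34, p43, p35, p53, p44, p45, p54, p55]; linear_combination hq2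
  -- the spacelike pair
  set Y4 := X4 - (d4 / a) • X1 with hY4def
  set Y5 := X5 - (d5 / a) • X1 with hY5def
  have w1 : eta X1 Y4 = 0 := by rw [hY4def]; simp only [eta_add_left, eta_add_right, eta_sub_left, eta_sub_right, eta_smul_left, eta_smul_right, p11, p12, p21, p13, p31, p14, p41, p15, p51, p22, p23, p32, p24, p42, p25, p52, p33, p34, p43, p35, p53, p44, p45, p54, p55]; ring
  have w2 : eta X2 Y4 = 0 := by rw [hY4def]; simp only [eta_add_left, eta_add_right, eta_sub_left, eta_sub_right, eta_smul_left, eta_smul_right, p11, p12, p21, p13, p31, p14, p41, p15, p51, p22, p23, p32, p24, p42, p25, p52, p33, p34, p43, p35, p53, p44, p45, p54, p55]; ring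
  have w3 : eta X3 Y4 = 0 := by rw [hY4def]; simp only [eta_add_left, eta_add_right, eta_sub_left, eta_sub_right, eta_smul_left, eta_smul_right, p11, p12, p21, p13, p31, p14, p41, p15, p51, p22, p23, p32, p24, p42, p25, p52, p33, p34, p43, p35, p53, p44, p45, p54, p55]; field_simp; ring
  have w4 : eta Y4 Y4 = f44 := by
    rw [hY4def]; simp only [eta_add_left, eta_add_right, eta_sub_left, eta_sub_right, eta_smul_left, eta_smul_right, p11, p12, p21, p13, p31, p14, p41, p15, p51, p22, p23, p32, p24, p42, p25, p52, p33, p34, p43, p35, p53, p44, p45, p54, p55]; ring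
  have w5 : eta X1 Y5 = 0 := by rw [hY5def]; simp only [eta_add_left, eta_add_right, eta_sub_left, eta_sub_right, eta_smul_left, eta_smul_right, p11, p12, p21, p13, p31, p14, p41, p15, p51, p22, p23, p32, p24, p42, p25, p52, p33, p34, p43, p35, p53, p44, p45, p54, p55]; ring
  have w6 : eta X2 Y5 = 0 := by rw [hY5def]; simp only [eta_add_left, eta_add_right, eta_sub_left, eta_sub_right, eta_smul_left, eta_smul_right, p11, p12, p21, p13, p31, p14, p41, p15, p51, p22, p23, p32, p24, p42, p25, p52, p33, p34, p43, p35, p53, p44, p45, p54, p55]; ring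
  have w7 : eta X3 Y5 = 0 := by rw [hY5def]; simp only [eta_add_left, eta_add_right, eta_sub_left, eta_sub_right, eta_smul_left, eta_smul_right, p11, p12, p21, p13, p31, p14, p41, p15, p51, p22, p23, p32, p24, p42, p25, p52, p33, p34, p43, p35, p53, p44, p45, p54, p55]; field_simp; ring
  have w8 : eta Y4 Y5 = f45 := by
    rw [hY4def, hY5def]; simp only [eta_add_left, eta_add_right, eta_sub_left, eta_sub_right, eta_smul_left, eta_smul_right, p11, p12, p21, p13, p31, p14, p41, p15, p51, p22, p23, p32, p24, p42, p25, p52, p33, p34, p43, p35, p53, p44, p45, p54, p55]; ring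
  have w9 : eta Y5 Y5 = f55 := by
    rw [hY5def]; simp only [eta_add_left, eta_add_right, eta_sub_left, eta_sub_right, eta_smul_left, eta_smul_right, p11, p12, p21, p13, p31, p14, p41, p15, p51, p22, p23, p32, p24, p42, p25, p52, p33, p34, p43, p35, p53, p44, p45, p54, p55]; ring
  have hY4ne : Y4 ≠ 0 := by
    intro h
    rw [hY4def] at h
    have h0 := li ![-(d4 / a), 0, 0, 1, 0] ?_ 3
    · change (1:ℝ) = 0 at h0; norm_num at h0
    · rw [Fin.sum_univ_five]
      simp only [Matrix.cons_val_zero, Matrix.cons_val_one, Matrix.head_cons,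
        Matrix.cons_val_two, Matrix.tail_cons, Matrix.cons_val_three, Matrix.cons_val_four]
      linear_combination (norm := module) h
  have hf44pos : 0 < f44 := by
    have := timelike_ortho tvec Y4 htvecneg (horth Y4 w1 w3) hY4ne
    rw [w4] at this; exact this
  have hf440 : f44 ≠ 0 := hf44pos.ne'
  set z' := Y5 - (f45 / f44) • Y4 with hz'def
  set ee := f55 - f45 ^ 2 / f44 with heedef
  have u1 : eta X1 z' = 0 := by
    rw [hz'def]; simp only [eta_add_left, eta_add_right, eta_sub_left, eta_sub_right, eta_smul_left, eta_smul_right, w1, w5]; ring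
  have u3 : eta X3 z' = 0 := by
    rw [hz'def]; simp only [eta_add_left, eta_add_right, eta_sub_left, eta_sub_right, eta_smul_left, eta_smul_right, w3, w7]; ring
  have u4 : eta Y4 z' = 0 := by
    rw [hz'def]; simp only [eta_add_left, eta_add_right, eta_sub_left, eta_sub_right, eta_smul_left, eta_smul_right, w4, w8]; field_simp; ring
  have u5 : eta z' z' = ee := by
    rw [hz'def, heedef]
    simp only [eta_add_left, eta_add_right, eta_sub_left, eta_sub_right, eta_smul_left, eta_smul_right, w4, w8, w9, eta_comm Y5 Y4]
    field_simp; ring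
  have hz'ne : z' ≠ 0 := by
    intro h
    rw [hz'def, hY5def, hY4def] at h
    have h0 := li ![-(d5 / a) + (f45 / f44) * (d4 / a), 0, 0, -(f45 / f44), 1] ?_ 4
    · change (1:ℝ) = 0 at h0; norm_num at h0
    · rw [Fin.sum_univ_five]
      simp only [Matrix.cons_val_zero, Matrix.cons_val_one, Matrix.head_cons,
        Matrix.cons_val_two, Matrix.tail_cons, Matrix.cons_val_three, Matrix.cons_val_four]
      linear_combination (norm := module) h
  have heepos : 0 < ee := by
    have hzo : eta X1 z' = 0 := u1
    have := timelike_ortho tvec z' htvecneg (horth z' u1 u3) hz'ne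
    rw [u5] at this; exact this
  set sy := Real.sqrt f44 with hsydef
  have hsy0 : sy ≠ 0 := by rw [hsydef]; exact (Real.sqrt_pos.mpr hf44pos).ne'
  have hsy2 : sy ^ 2 = f44 := Real.sq_sqrt hf44pos.le
  set sz := Real.sqrt ee with hszdef
  have hsz0 : sz ≠ 0 := by rw [hszdef]; exact (Real.sqrt_pos.mpr heepos).ne'
  have hsz2 : sz ^ 2 = ee := Real.sq_sqrt heepos.le
  set y := sy⁻¹ • Y4 with hydef
  set z := sz⁻¹ • z' with hzdef
  -- remaining Gram facts
  have gyy : eta y y = 1 := by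
    rw [hydef]; simp only [eta_add_left, eta_add_right, eta_sub_left, eta_sub_right, eta_smul_left, eta_smul_right, w4]
    rw [← hsy2]; field_simp
  have gzz : eta z z = 1 := by
    rw [hzdef]; simp only [eta_add_left, eta_add_right, eta_sub_left, eta_sub_right, eta_smul_left, eta_smul_right, u5]
    rw [← hsz2]; field_simp
  have gyz : eta y z = 0 := by
    rw [hydef, hzdef]; simp only [eta_add_left, eta_add_right, eta_sub_left, eta_sub_right, eta_smul_left, eta_smul_right, u4]; ring
  have gly : eta l y = 0 := by
    rw [hldef, hydef]; simp only [eta_add_left, eta_add_right, eta_sub_left, eta_sub_right, eta_smul_left, eta_smul_right, w1]; ring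
  have glz : eta l z = 0 := by
    rw [hldef, hzdef]; simp only [eta_add_left, eta_add_right, eta_sub_left, eta_sub_right, eta_smul_left, eta_smul_right, u1]; ring
  have u2 : eta X2 z' = 0 := by
    rw [hz'def]; simp only [eta_add_left, eta_add_right, eta_sub_left, eta_sub_right, eta_smul_left, eta_smul_right, w2, w6]; ring
  have gxy : eta x y = 0 := by
    rw [hxdef, hydef]; simp only [eta_add_left, eta_add_right, eta_sub_left, eta_sub_right, eta_smul_left, eta_smul_right, w1, w2]; ring
  have gxz : eta x z = 0 := by
    rw [hxdef, hzdef]; simp only [eta_add_left, eta_add_right, eta_sub_left, eta_sub_right, eta_smul_left, eta_smul_right, u1, u2]; ring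
  have gmy : eta m y = 0 := by
    rw [hmdef, hydef]; simp only [eta_add_left, eta_add_right, eta_sub_left, eta_sub_right, eta_smul_left, eta_smul_right, w1, w2, w3]; ring
  have gmz : eta m z = 0 := by
    rw [hmdef, hzdef]; simp only [eta_add_left, eta_add_right, eta_sub_left, eta_sub_right, eta_smul_left, eta_smul_right, u1, u2, u3]; ring
  have gmx : eta m x = 0 := (eta_comm _ _).trans gxm
  -- reversed Gram facts
  have gml : eta m l = 1 := (eta_comm _ _).trans glm
  have gxl : eta x l = 0 := (eta_comm _ _).trans glx
  have gyl : eta y l = 0 := (eta_comm _ _).trans gly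
  have gzl : eta z l = 0 := (eta_comm _ _).trans glz
  have gym : eta y m = 0 := (eta_comm _ _).trans gmy
  have gzm : eta z m = 0 := (eta_comm _ _).trans gmz
  have gyx : eta y x = 0 := (eta_comm _ _).trans gxy
  have gzx : eta z x = 0 := (eta_comm _ _).trans gxz
  have gzy : eta z y = 0 := (eta_comm _ _).trans gyz
  -- action of R on the pentad
  have hRl : R l = lam1 • l := by
    rw [hldef, map_smul, h1, smul_comm]
  have hRx : R x = lam1 • x + l := by
    rw [hxdef, hldef, map_add, map_smul, map_smul, h1, h2]
    module
  have hRm : R m = lam1 • m + x := by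
    rw [hmdef, hxdef, map_add, map_add, map_smul, map_smul, map_smul, h1, h2, h3]
    module
  have hRY4 : R Y4 = lam2 • Y4 := by
    rw [hY4def, map_sub, map_smul, h1, h4]
    match_scalars
    all_goals first | ring1 | linear_combination (1/a) * k4
  have hRY5 : R Y5 = lam3 • Y5 := by
    rw [hY5def, map_sub, map_smul, h1, h5]
    match_scalars
    all_goals first | ring1 | linear_combination (1/a) * k5
  have hRy : R y = lam2 • y := by
    rw [hydef, map_smul, hRY4, smul_comm]
  have hRz' : R z' = lam3 • z' := by
    rw [hz'def, map_sub, map_smul, hRY4, hRY5]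
    match_scalars
    all_goals first | ring1 | linear_combination (-(1:ℝ)/f44) * k45 |
      linear_combination (d4/(a*f44)) * k45
  have hRz : R z = lam3 • z := by
    rw [hzdef, map_smul, hRz', smul_comm]
  -- the canonical form holds on the pentad vectors
  have Pl : ∀ v, eta (R l) v =
      lam1 * (eta l l * eta m v + eta m l * eta l v) +
        (eta l l * eta x v + eta x l * eta l v) +
        lam1 * (eta x l * eta x v) + lam2 * (eta y l * eta y v) +
        lam3 * (eta z l * eta z v) := by
    intro v
    rw [hRl, eta_smul_left, gll, gml, gxl, gyl, gzl]; ring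
  have Pm : ∀ v, eta (R m) v =
      lam1 * (eta l m * eta m v + eta m m * eta l v) +
        (eta l m * eta x v + eta x m * eta l v) +
        lam1 * (eta x m * eta x v) + lam2 * (eta y m * eta y v) +
        lam3 * (eta z m * eta z v) := by
    intro v
    rw [hRm, eta_add_left, eta_smul_left, glm, gmm, gxm, gym, gzm]
    ring
  have Px : ∀ v, eta (R x) v =
      lam1 * (eta l x * eta m v + eta m x * eta l v) +
        (eta l x * eta x v + eta x x * eta l v) +
        lam1 * (eta x x * eta x v) + lam2 * (eta y x * eta y v) +
        lam3 * (eta z x * eta z v) := by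
    intro v
    rw [hRx, eta_add_left, eta_smul_left, glx, gmx, gxx, gyx, gzx]; ring
  have Py : ∀ v, eta (R y) v =
      lam1 * (eta l y * eta m v + eta m y * eta l v) +
        (eta l y * eta x v + eta x y * eta l v) +
        lam1 * (eta x y * eta x v) + lam2 * (eta y y * eta y v) +
        lam3 * (eta z y * eta z v) := by
    intro v
    rw [hRy, eta_smul_left, gly, gmy, gxy, gyy, gzy]; ring
  have Pz : ∀ v, eta (R z) v =
      lam1 * (eta l z * eta m v + eta m z * eta l v) +
        (eta l z * eta x v + eta x z * eta l v) +
        lam1 * (eta x z * eta x v) + lam2 * (eta y z * eta y v) +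
        lam3 * (eta z z * eta z v) := by
    intro v
    rw [hRz, eta_smul_left, glz, gmz, gxz, gyz, gzz]; ring
  -- the pentad spans
  have memX1 : X1 ∈ Submodule.span ℝ ({l, m, x, y, z} : Set (Fin 5 → ℝ)) := by
    have h : X1 = s • l := by
      rw [hldef, httdef, smul_smul, mul_inv_cancel₀ hs0, one_smul]
    rw [h]
    exact Submodule.smul_mem _ _ (Submodule.subset_span (by simp))
  have memX2 : X2 ∈ Submodule.span ℝ ({l, m, x, y, z} : Set (Fin 5 → ℝ)) := by
    have h : X2 = s • x - (s * p) • X1 := by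
      rw [hxdef, httdef]
      match_scalars
      · field_simp
      · ring
    rw [h]
    exact sub_mem (Submodule.smul_mem _ _ (Submodule.subset_span (by simp)))
      (Submodule.smul_mem _ _ memX1)
  have memX3 : X3 ∈ Submodule.span ℝ ({l, m, x, y, z} : Set (Fin 5 → ℝ)) := by
    have h : X3 = s • m - (s * p) • X2 - (s * q) • X1 := by
      rw [hmdef, httdef]
      match_scalars
      · field_simp
      · ring
      · ring
    rw [h]
    exact sub_mem (sub_mem (Submodule.smul_mem _ _ (Submodule.subset_span (by simp)))
      (Submodule.smul_mem _ _ memX2)) (Submodule.smul_mem _ _ memX1)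
  have memY4 : Y4 ∈ Submodule.span ℝ ({l, m, x, y, z} : Set (Fin 5 → ℝ)) := by
    have h : Y4 = sy • y := by
      rw [hydef, smul_smul, mul_inv_cancel₀ hsy0, one_smul]
    rw [h]
    exact Submodule.smul_mem _ _ (Submodule.subset_span (by simp))
  have memX4 : X4 ∈ Submodule.span ℝ ({l, m, x, y, z} : Set (Fin 5 → ℝ)) := by
    have h : X4 = Y4 + (d4 / a) • X1 := by rw [hY4def]; module
    rw [h]
    exact add_mem memY4 (Submodule.smul_mem _ _ memX1)
  have memX5 : X5 ∈ Submodule.span ℝ ({l, m, x, y, z} : Set (Fin 5 → ℝ)) := by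
    have h : X5 = sz • z + (f45 / f44) • Y4 + (d5 / a) • X1 := by
      rw [hzdef, hz'def, hY5def, smul_smul, mul_inv_cancel₀ hsz0, one_smul]
      module
    rw [h]
    exact add_mem (add_mem (Submodule.smul_mem _ _ (Submodule.subset_span (by simp)))
      (Submodule.smul_mem _ _ memY4)) (Submodule.smul_mem _ _ memX1)
  have hspan2 : Submodule.span ℝ ({l, m, x, y, z} : Set (Fin 5 → ℝ)) = ⊤ := by
    rw [eq_top_iff, ← hspan]
    apply Submodule.span_le.mpr
    intro w hw
    simp only [Set.mem_insert_iff, Set.mem_singleton_iff] at hw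
    rcases hw with rfl | rfl | rfl | rfl | rfl
    exacts [memX1, memX2, memX3, memX4, memX5]
  -- conclusion
  refine ⟨l, m, x, y, z,
    ⟨glm, gxx, gyy, gzz, gll, gmm, glx, gly, glz, gmx, gmy, gmz, gxy, gxz, gyz⟩,
    lam1, lam2, lam3, ?_⟩
  intro u v
  have hu : u ∈ Submodule.span ℝ ({l, m, x, y, z} : Set (Fin 5 → ℝ)) := by
    rw [hspan2]; trivial
  refine Submodule.span_induction (p := fun w _ => ∀ v, eta (R w) v =
      lam1 * (eta l w * eta m v + eta m w * eta l v) +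
        (eta l w * eta x v + eta x w * eta l v) +
        lam1 * (eta x w * eta x v) + lam2 * (eta y w * eta y v) +
        lam3 * (eta z w * eta z v)) ?_ ?_ ?_ ?_ hu v
  · intro w hw
    simp only [Set.mem_insert_iff, Set.mem_singleton_iff] at hw
    rcases hw with rfl | rfl | rfl | rfl | rfl
    exacts [Pl, Pm, Px, Py, Pz]
  · intro v'
    simp only [map_zero, eta_zero_left, eta_zero_right]; ring
  · intro u1 u2 _ _ hu1 hu2 v'
    simp only [map_add, eta_add_left, eta_add_right, hu1 v', hu2 v']; ring
  · intro cc w _ hw v'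
    simp only [map_smul, eta_smul_left, eta_smul_right, hw v']; ring
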